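/- Let W ≥ k ≥ 3 and r ≥ 1 be integers such that every r-colouring of any arithmetic progression of length W in ℕ yields a monochromatic arithmetic progression of length k. Let n ≥ 2W² and consider any (r+1)-colouring of [n] = {1,...,n} in which at most n/(4W) elements receive colour r+1. Then the number of arithmetic progressions of length k in [n] that are monochromatic in one of the first r colours is at least n²/(2W³). -/

import Mathlib

/-- The arithmetic progression `{a, a+d, ..., a+(m-1)d}` as a finite set. -/
def AP (m a d : ℕ) : Finset ℕ := (Finset.range m).image (fun i => a + i * d)

lemma mem_AP {m a d x : ℕ} : x ∈ AP m a d ↔ ∃ i < m, x = a + i * d := by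
  simp [AP, eq_comm]

lemma AP_eq_inj {k a b d e : ℕ} (hk : 2 ≤ k) (hd : 0 < d) (he : 0 < e)
    (h : AP k a d = AP k b e) : a = b ∧ d = e := by
  have h1 : a ∈ AP k b e := by rw [← h]; exact mem_AP.2 ⟨0, by omega, by ring⟩
  have h2 : b ∈ AP k a d := by rw [h]; exact mem_AP.2 ⟨0, by omega, by ring⟩
  obtain ⟨i, _, hi⟩ := mem_AP.1 h1
  obtain ⟨j, _, hj⟩ := mem_AP.1 h2
  have hab : a = b := by
    have : b ≤ a := hi ▸ Nat.le_add_right _ _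
    have : a ≤ b := hj ▸ Nat.le_add_right _ _
    omega
  subst hab
  refine ⟨rfl, ?_⟩
  have h3 : a + (k-1)*d ∈ AP k a e := by rw [← h]; exact mem_AP.2 ⟨k-1, by omega, rfl⟩
  have h4 : a + (k-1)*e ∈ AP k a d := by rw [h]; exact mem_AP.2 ⟨k-1, by omega, rfl⟩
  obtain ⟨i', hi'k, hi'⟩ := mem_AP.1 h3
  obtain ⟨j', hj'k, hj'⟩ := mem_AP.1 h4
  have e1 : (k-1)*d = i'*e := by omega
  have e2 : (k-1)*e = j'*d := by omega
  have l1 : (k-1)*d ≤ (k-1)*e := e1 ▸ Nat.mul_le_mul_right e (by omega)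
  have l2 : (k-1)*e ≤ (k-1)*d := e2 ▸ Nat.mul_le_mul_right d (by omega)
  have : (k-1)*d = (k-1)*e := le_antisymm l1 l2
  exact Nat.eq_of_mul_eq_mul_left (by omega) this

lemma gauss_real (D : ℕ) : ∑ d ∈ Finset.Icc 1 D, (d:ℝ) = D*(D+1)/2 := by
  induction D with
  | zero => simp
  | succ p ih =>
    rw [Finset.sum_Icc_succ_top (by omega)]
    push_cast
    rw [ih]; ring

set_option maxHeartbeats 1000000 in
theorem stmt_17 (W k r n : ℕ) (hk : 3 ≤ k) (hkW : k ≤ W) (hr : 1 ≤ r)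
    (hvdW : ∀ a d : ℕ, 0 < d → ∀ c : ℕ → Fin r,
      ∃ a' d' : ℕ, 0 < d' ∧ AP k a' d' ⊆ AP W a d ∧
        ∃ i : Fin r, ∀ x ∈ AP k a' d', c x = i)
    (hn : 2 * W ^ 2 ≤ n)
    (χ : ℕ → Fin (r + 1))
    (hlast : (((Finset.Icc 1 n).filter (fun x => χ x = Fin.last r)).card : ℝ)
      ≤ (n : ℝ) / (4 * W)) :
    ((n : ℝ) ^ 2) / (2 * (W : ℝ) ^ 3) ≤
      ({P : Finset ℕ | (∃ a d : ℕ, 0 < d ∧ P = AP k a d) ∧ ↑P ⊆ Set.Icc 1 n ∧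
        ∃ i : Fin (r + 1), i ≠ Fin.last r ∧ ∀ x ∈ P, χ x = i}.ncard : ℝ) := by
  classical
  have hW3 : 3 ≤ W := hk.trans hkW
  set m := (W - 1) / 2 with hm
  set D := 3 * n / (4 * W) with hDdef
  -- the reduced colouring
  set c : ℕ → Fin r := fun x => if h : χ x = Fin.last r then ⟨0, hr⟩ else (χ x).castPred h with hc
  have key := fun a d hd => hvdW a d hd c
  choose A' D' hD' hsub ci hmono using key
  set f : ℕ × ℕ → Finset ℕ :=
    fun p => if h : 0 < p.2 then AP k (A' p.1 p.2 h) (D' p.1 p.2 h) else ∅ with hf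
  set lastF := (Finset.Icc 1 n).filter (fun x => χ x = Fin.last r) with hlF
  set A : Finset (ℕ × ℕ) :=
    (Finset.Icc 1 D).biUnion (fun d => (Finset.Icc 1 (n - (W-1)*d)).image (fun a => (a, d)))
    with hA
  -- bound (W-1)*D ≤ n etc.
  have hDub : 4 * W * D ≤ 3 * n := by
    have h := Nat.div_mul_le_self (3*n) (4*W)
    rw [← hDdef] at h
    calc 4*W*D = D*(4*W) := by ring
      _ ≤ 3*n := h
  have hDlb : 3 * n < 4 * W * (D + 1) := by
    have h1 := Nat.div_add_mod (3*n) (4*W)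
    have h2 := Nat.mod_lt (3*n) (show 0 < 4*W by omega)
    rw [← hDdef] at h1
    have hexp : 4*W*(D+1) = 4*W*D + 4*W := by ring
    omega
  have hWD : (W-1) * D ≤ n := by
    have h1 : (W-1)*D ≤ W*D := Nat.mul_le_mul_right _ (by omega)
    have h2 : 4*W*D = 4*(W*D) := by ring
    omega
  have hmemA : ∀ p : ℕ × ℕ, p ∈ A ↔
      (1 ≤ p.1 ∧ 1 ≤ p.2 ∧ p.2 ≤ D ∧ p.1 + (W-1)*p.2 ≤ n) := by
    intro p
    simp only [hA, Finset.mem_biUnion, Finset.mem_image, Finset.mem_Icc]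
    constructor
    · rintro ⟨d, ⟨hd1, hd2⟩, a, ⟨ha1, ha2⟩, rfl⟩
      have hle : (W-1)*d ≤ (W-1)*D := Nat.mul_le_mul_left _ hd2
      dsimp only
      refine ⟨ha1, hd1, hd2, by omega⟩
    · rintro ⟨h1, h2, h3, h4⟩
      exact ⟨p.2, ⟨h2, h3⟩, p.1, ⟨h1, by omega⟩, by simp⟩
  set Bad := A.filter (fun p => ∃ x ∈ AP W p.1 p.2, χ x = Fin.last r) with hBadDef
  set Good := A.filter (fun p => ¬ ∃ x ∈ AP W p.1 p.2, χ x = Fin.last r) with hGoodDef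
  set T := Good.image f with hT
  set C := m * (W - 2) with hCdef
  -- counts
  have hdisj : ∀ d1 ∈ Finset.Icc 1 D, ∀ d2 ∈ Finset.Icc 1 D, d1 ≠ d2 →
      Disjoint ((Finset.Icc 1 (n - (W-1)*d1)).image (fun a => (a, d1)))
        ((Finset.Icc 1 (n - (W-1)*d2)).image (fun a => (a, d2))) := by
    intro d1 _ d2 _ hne
    simp only [Finset.disjoint_left, Finset.mem_image]
    rintro p ⟨a, _, rfl⟩ ⟨b, _, hb⟩
    exact hne (congrArg Prod.snd hb).symm
  have hAcardN : A.card = ∑ d ∈ Finset.Icc 1 D, (n - (W-1)*d) := by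
    rw [hA, Finset.card_biUnion hdisj]
    apply Finset.sum_congr rfl
    intro d _
    rw [Finset.card_image_of_injective _ (fun a b hab => (Prod.ext_iff.1 hab).1)]
    simp [Nat.card_Icc]
  have hAcard : (A.card : ℝ) = D*n - (W-1)*(D*(D+1)/2) := by
    have hterm : ∀ d ∈ Finset.Icc 1 D, ((n - (W-1)*d : ℕ) : ℝ) = (n:ℝ) - ((W:ℝ)-1)*d := by
      intro d hd
      have hd2 : d ≤ D := (Finset.mem_Icc.1 hd).2
      have hle : (W-1)*d ≤ n := le_trans (Nat.mul_le_mul_left _ hd2) hWD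
      rw [Nat.cast_sub hle]
      push_cast [Nat.cast_sub (show 1 ≤ W by omega)]
      ring
    rw [hAcardN, Nat.cast_sum, Finset.sum_congr rfl hterm, Finset.sum_sub_distrib,
      Finset.sum_const, ← Finset.mul_sum, gauss_real]
    simp [Nat.card_Icc]
  have hbadW : ∀ p : ℕ×ℕ, ∃ x i, p ∈ Bad → (x ∈ lastF ∧ i < W ∧ x = p.1 + i * p.2) := by
    intro p
    by_cases hp : p ∈ Bad
    · obtain ⟨hpA, x, hx, hχ⟩ := Finset.mem_filter.1 hp
      obtain ⟨i, hiW, hxi⟩ := mem_AP.1 hx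
      obtain ⟨hp1, hp2, hpD, hpn⟩ := (hmemA p).1 hpA
      refine ⟨x, i, fun _ => ⟨?_, hiW, hxi⟩⟩
      have hle : i * p.2 ≤ (W-1) * p.2 := Nat.mul_le_mul_right _ (by omega)
      exact Finset.mem_filter.2 ⟨Finset.mem_Icc.2 ⟨by omega, by omega⟩, hχ⟩
    · exact ⟨0, 0, fun h => absurd h hp⟩
  choose xb ib hxb using hbadW
  have hBadcardN : Bad.card ≤ lastF.card * (W * D) := by
    have h := Finset.card_le_card_of_injOn (s := Bad) (fun p => (xb p, (ib p, p.2)))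
      (t := lastF ×ˢ (Finset.range W ×ˢ Finset.Icc 1 D)) ?_ ?_
    · calc Bad.card ≤ (lastF ×ˢ (Finset.range W ×ˢ Finset.Icc 1 D)).card := h
        _ = lastF.card * (W * D) := by simp [Nat.card_Icc]
    · intro p hp
      obtain ⟨hxl, hiW, _⟩ := hxb p hp
      obtain ⟨_, hp2, hpD, _⟩ := (hmemA p).1 (Finset.mem_filter.1 hp).1
      simp only [Finset.mem_coe, Finset.mem_product, Finset.mem_range, Finset.mem_Icc]
      exact ⟨hxl, hiW, hp2, hpD⟩
    · intro p hp q hq heq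
      obtain ⟨_, _, hxp⟩ := hxb p hp
      obtain ⟨_, _, hxq⟩ := hxb q hq
      simp only [Prod.mk.injEq] at heq
      obtain ⟨hx, hi, h2⟩ := heq
      have hmul : ib p * p.2 = ib q * q.2 := by rw [hi, h2]
      have : p.1 = q.1 := by omega
      exact Prod.ext this h2
  have hBadcard : (Bad.card : ℝ) ≤ lastF.card * (W * D) := by exact_mod_cast hBadcardN
  have hGoodA : (Good.card : ℝ) = A.card - Bad.card := by
    have h := Finset.card_filter_add_card_filter_not
      (s := A) (p := fun p => ∃ x ∈ AP W p.1 p.2, χ x = Fin.last r)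
    rw [← hBadDef, ← hGoodDef] at h
    have := congrArg (fun x : ℕ => (x : ℝ)) h
    push_cast at this
    linarith
  have hfiber : Good.card ≤ C * T.card := by
    rw [hT]
    apply Finset.card_le_mul_card_image
    intro P hP
    obtain ⟨p₀, hp₀G, hfp₀⟩ := Finset.mem_image.1 hP
    have hp₀2 : 0 < p₀.2 := ((hmemA p₀).1 (Finset.mem_filter.1 hp₀G).1).2.1
    set a0 := A' p₀.1 p₀.2 hp₀2 with ha0
    set d0 := D' p₀.1 p₀.2 hp₀2 with hd0def
    have hd0 : 0 < d0 := hD' _ _ _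
    have hPeq : AP k a0 d0 = P := by
      rw [← hfp₀]; simp only [hf]; rw [dif_pos hp₀2]
    have hstruct : ∀ p ∈ Good.filter (fun p => f p = P), ∃ t i, 1 ≤ t ∧
        d0 = t * p.2 ∧ a0 = p.1 + i * p.2 ∧ i + 2*t ≤ W - 1 ∧
        (d0 / p.2, (a0 - p.1) / p.2) = (t, i) := by
      intro p hp
      obtain ⟨hpG, hfp⟩ := Finset.mem_filter.1 hp
      have hp2 : 0 < p.2 := ((hmemA p).1 (Finset.mem_filter.1 hpG).1).2.1
      have hfp2 : f p = AP k (A' p.1 p.2 hp2) (D' p.1 p.2 hp2) := by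
        simp only [hf]; rw [dif_pos hp2]
      have heqAP : AP k (A' p.1 p.2 hp2) (D' p.1 p.2 hp2) = AP k a0 d0 := by
        rw [← hfp2, hfp, ← hPeq]
      obtain ⟨hA'eq, hD'eq⟩ := AP_eq_inj (by omega) (hD' _ _ hp2) hd0 heqAP
      have hsubp : AP k a0 d0 ⊆ AP W p.1 p.2 := by
        rw [← hA'eq, ← hD'eq]; exact hsub p.1 p.2 hp2
      have m1 : a0 ∈ AP W p.1 p.2 := hsubp (mem_AP.2 ⟨0, by omega, by ring⟩)
      have m2 : a0 + d0 ∈ AP W p.1 p.2 := hsubp (mem_AP.2 ⟨1, by omega, by ring⟩)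
      have m3 : a0 + (k-1)*d0 ∈ AP W p.1 p.2 := hsubp (mem_AP.2 ⟨k-1, by omega, rfl⟩)
      obtain ⟨i1, hi1W, e1⟩ := mem_AP.1 m1
      obtain ⟨i2, hi2W, e2⟩ := mem_AP.1 m2
      obtain ⟨i3, hi3W, e3⟩ := mem_AP.1 m3
      have hlt : i1 < i2 := by
        have hmul : i1 * p.2 < i2 * p.2 := by omega
        exact lt_of_mul_lt_mul_right hmul (Nat.zero_le _)
      have htd : d0 = (i2 - i1) * p.2 := by
        have hsm : (i2 - i1) * p.2 = i2*p.2 - i1*p.2 := Nat.sub_mul _ _ _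
        omega
      have hi3 : i3 = i1 + (k-1)*(i2-i1) := by
        have h5 : (k-1)*d0 = ((k-1)*(i2-i1))*p.2 := by rw [htd]; ring
        have h7 : (i1 + (k-1)*(i2-i1))*p.2 = i1*p.2 + ((k-1)*(i2-i1))*p.2 := by ring
        have h6 : i3 * p.2 = (i1 + (k-1)*(i2-i1)) * p.2 := by omega
        exact Nat.eq_of_mul_eq_mul_right hp2 h6
      have h2t : 2*(i2-i1) ≤ (k-1)*(i2-i1) := Nat.mul_le_mul_right _ (by omega)
      refine ⟨i2 - i1, i1, by omega, htd, by omega, by omega, ?_⟩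
      have hdiv1 : d0 / p.2 = i2 - i1 := by rw [htd]; exact Nat.mul_div_cancel _ hp2
      have hdiv2 : (a0 - p.1) / p.2 = i1 := by
        have : a0 - p.1 = i1 * p.2 := by omega
        rw [this]; exact Nat.mul_div_cancel _ hp2
      rw [hdiv1, hdiv2]
    calc (Good.filter (fun p => f p = P)).card
        ≤ (Finset.Icc 1 m ×ˢ Finset.range (W-2)).card := by
          apply Finset.card_le_card_of_injOn (fun p => (d0 / p.2, (a0 - p.1) / p.2))
          · intro p hp
            obtain ⟨t, i, ht1, htd, hai, hbnd, hgp⟩ := hstruct p hp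
            dsimp only
            rw [hgp]
            simp only [Finset.mem_coe, Finset.mem_product, Finset.mem_Icc, Finset.mem_range]
            refine ⟨⟨ht1, ?_⟩, by omega⟩
            rw [hm]
            rw [Nat.le_div_iff_mul_le (by norm_num)]
            omega
          · intro p hp q hq heq
            obtain ⟨t, i, ht1, htdp, haip, _, hgp⟩ := hstruct p hp
            obtain ⟨t', i', ht1', htdq, haiq, _, hgq⟩ := hstruct q hq
            have heq' : (d0 / p.2, (a0 - p.1) / p.2) = (d0 / q.2, (a0 - q.1) / q.2) := heq
            rw [hgp, hgq] at heq'
            simp only [Prod.mk.injEq] at heq'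
            replace heq := heq' 
            obtain ⟨hte, hie⟩ := heq
            subst hte; subst hie
            have h2 : p.2 = q.2 := by
              have := htdp.symm.trans htdq
              exact Nat.eq_of_mul_eq_mul_left (by omega) this
            have hmul : i * p.2 = i * q.2 := by rw [h2]
            have h1 : p.1 = q.1 := by omega
            exact Prod.ext h1 h2
        _ = C := by simp [Nat.card_Icc, hCdef]
  have hTtarget : (T.card : ℝ) ≤
      ({P : Finset ℕ | (∃ a d : ℕ, 0 < d ∧ P = AP k a d) ∧ ↑P ⊆ Set.Icc 1 n ∧
        ∃ i : Fin (r + 1), i ≠ Fin.last r ∧ ∀ x ∈ P, χ x = i}.ncard : ℝ) := by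
    set tgt : Set (Finset ℕ) := {P : Finset ℕ | (∃ a d : ℕ, 0 < d ∧ P = AP k a d) ∧
        ↑P ⊆ Set.Icc 1 n ∧
        ∃ i : Fin (r + 1), i ≠ Fin.last r ∧ ∀ x ∈ P, χ x = i} with htgt
    have hsubT : ↑T ⊆ tgt := by
      intro P hP
      obtain ⟨p, hpG, rfl⟩ := Finset.mem_image.1 (Finset.mem_coe.1 hP)
      obtain ⟨hpA, hpnot⟩ := Finset.mem_filter.1 hpG
      obtain ⟨hp1, hp2x, hpD, hpn⟩ := (hmemA p).1 hpA
      have hp2 : 0 < p.2 := hp2x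
      have hfp : f p = AP k (A' p.1 p.2 hp2) (D' p.1 p.2 hp2) := by
        simp only [hf]; rw [dif_pos hp2]
      have hsubW : ∀ x ∈ f p, x ∈ AP W p.1 p.2 := by
        intro x hx
        rw [hfp] at hx
        exact hsub p.1 p.2 hp2 hx
      refine ⟨⟨A' p.1 p.2 hp2, D' p.1 p.2 hp2, hD' _ _ _, hfp⟩, ?_, ?_⟩
      · intro x hx
        obtain ⟨i, hiW, hxi⟩ := mem_AP.1 (hsubW x (Finset.mem_coe.1 hx))
        have hle : i * p.2 ≤ (W-1) * p.2 := Nat.mul_le_mul_right _ (by omega)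
        exact ⟨by omega, by omega⟩
      · refine ⟨(ci p.1 p.2 hp2).castSucc, ?_, ?_⟩
        · exact ne_of_lt (Fin.castSucc_lt_last _)
        · intro x hx
          have hneq : χ x ≠ Fin.last r := fun hbad => hpnot ⟨x, hsubW x hx, hbad⟩
          have hmx : c x = ci p.1 p.2 hp2 := by
            apply hmono p.1 p.2 hp2
            rw [← hfp]; exact hx
          rw [hc] at hmx
          simp only [dif_neg hneq] at hmx
          rw [← Fin.castSucc_castPred (χ x) hneq, hmx]
    have hfin : tgt.Finite := by
      apply Set.Finite.subset (Finset.Icc 1 n).powerset.finite_toSet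
      intro P hP
      simp only [Finset.coe_powerset, Set.mem_preimage, Set.mem_powerset_iff]
      intro x hx
      have := hP.2.1 hx
      simp only [Finset.coe_Icc]
      exact this
    have h1 : (↑T : Set (Finset ℕ)).ncard ≤ tgt.ncard := Set.ncard_le_ncard hsubT hfin
    rw [Set.ncard_coe_finset] at h1
    exact_mod_cast h1
  -- final arithmetic
  have hWr : (3:ℝ) ≤ (W:ℝ) := by exact_mod_cast hW3
  have hnr : 2*(W:ℝ)^2 ≤ (n:ℝ) := by exact_mod_cast hn
  have hDr1 : 4*(W:ℝ)*(D:ℝ) ≤ 3*(n:ℝ) := by exact_mod_cast hDub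
  have hDr2 : 3*(n:ℝ) < 4*(W:ℝ)*((D:ℝ)+1) := by exact_mod_cast hDlb
  have hDr0 : (0:ℝ) ≤ (D:ℝ) := Nat.cast_nonneg _
  have hnr0 : (0:ℝ) ≤ (n:ℝ) := Nat.cast_nonneg _
  have hCrN : 2*C ≤ (W-1)*(W-2) := by
    have h2m : 2*m ≤ W-1 := by rw [hm]; omega
    calc 2*C = (2*m)*(W-2) := by rw [hCdef]; ring
      _ ≤ (W-1)*(W-2) := Nat.mul_le_mul_right _ h2m
  have hCr : 2*(C:ℝ) ≤ ((W:ℝ)-1)*((W:ℝ)-2) := by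
    have := (Nat.cast_le (α := ℝ)).2 hCrN
    push_cast [Nat.cast_sub (show 1 ≤ W by omega), Nat.cast_sub (show 2 ≤ W by omega)] at this
    linarith
  have hC1 : 1 ≤ C := by
    have h1 : 1 ≤ m := by rw [hm]; omega
    have : 1*1 ≤ m*(W-2) := Nat.mul_le_mul h1 (by omega)
    omega
  have hC1r : (1:ℝ) ≤ (C:ℝ) := by exact_mod_cast hC1
  clear_value m D
  -- key polynomial inequality
  have ha : (n:ℝ)*(3*(W:ℝ)-2) ≤ 4*(W:ℝ)^2*(D:ℝ) := by
    nlinarith only [mul_le_mul_of_nonneg_left hDr2.le (show (0:ℝ) ≤ (W:ℝ) by linarith only [hWr]), hnr, hWr]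
  have hb : 4*(W:ℝ)*(((W:ℝ)-1)*((D:ℝ)+1)) ≤ (n:ℝ)*(3*(W:ℝ)-1) := by
    nlinarith only [mul_le_mul_of_nonneg_left hDr1 (show (0:ℝ) ≤ (W:ℝ)-1 by linarith only [hWr]), hnr, hWr]
  set X : ℝ := (D:ℝ)*(3*(n:ℝ) - 2*(((W:ℝ)-1)*((D:ℝ)+1))) with hX
  have hc' : (D:ℝ)*(n:ℝ)*(3*(W:ℝ)+1) ≤ 2*(W:ℝ)*X := by
    rw [hX]
    nlinarith only [mul_le_mul_of_nonneg_left hb hDr0]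
  have hd : (n:ℝ)^2*((3*(W:ℝ)-2)*(3*(W:ℝ)+1)) ≤ 8*(W:ℝ)^3*X := by
    have h1 : 4*(W:ℝ)^2*((D:ℝ)*(n:ℝ)*(3*(W:ℝ)+1)) ≤ 4*(W:ℝ)^2*(2*(W:ℝ)*X) :=
      mul_le_mul_of_nonneg_left hc' (by positivity)
    have h2 : ((n:ℝ)*(3*(W:ℝ)-2))*((n:ℝ)*(3*(W:ℝ)+1)) ≤ (4*(W:ℝ)^2*(D:ℝ))*((n:ℝ)*(3*(W:ℝ)+1)) :=
      mul_le_mul_of_nonneg_right ha (by nlinarith only [hnr0, hWr])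
    nlinarith only [h1, h2]
  have he : 16*(C:ℝ) ≤ (3*(W:ℝ)-2)*(3*(W:ℝ)+1) := by nlinarith only [hCr, hWr]
  have hM : 2*(C:ℝ)*(n:ℝ)^2 ≤ (W:ℝ)^3*X := by
    have he2 : 16*(C:ℝ)*(n:ℝ)^2 ≤ (3*(W:ℝ)-2)*(3*(W:ℝ)+1)*(n:ℝ)^2 := by
      have := mul_le_mul_of_nonneg_right he (sq_nonneg (n:ℝ))
      linarith only [this]
    nlinarith only [hd, he2]
  -- assemble
  have hsimp : ((n:ℝ)/(4*(W:ℝ)))*((W:ℝ)*(D:ℝ)) = (n:ℝ)*(D:ℝ)/4 := by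
    field_simp
  have hE : (D:ℝ)*(n:ℝ) - ((W:ℝ)-1)*((D:ℝ)*((D:ℝ)+1)/2) - (n:ℝ)*(D:ℝ)/4 ≤ (Good.card : ℝ) := by
    have hB2 : (Bad.card:ℝ) ≤ ((n:ℝ)/(4*(W:ℝ)))*((W:ℝ)*(D:ℝ)) := by
      refine le_trans hBadcard ?_
      apply mul_le_mul_of_nonneg_right hlast
      positivity
    rw [hGoodA, hAcard]
    rw [hsimp] at hB2
    linarith
  have hGT : (Good.card : ℝ) ≤ (C:ℝ) * (T.card:ℝ) := by exact_mod_cast hfiber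
  set N : ℝ := ({P : Finset ℕ | (∃ a d : ℕ, 0 < d ∧ P = AP k a d) ∧ ↑P ⊆ Set.Icc 1 n ∧
        ∃ i : Fin (r + 1), i ≠ Fin.last r ∧ ∀ x ∈ P, χ x = i}.ncard : ℝ) with hN
  have hTN : (T.card:ℝ) ≤ N := hTtarget
  have hEX : (D:ℝ)*(n:ℝ) - ((W:ℝ)-1)*((D:ℝ)*((D:ℝ)+1)/2) - (n:ℝ)*(D:ℝ)/4 = X/4 := by
    rw [hX]; ring
  have hq : (C:ℝ)*(n:ℝ)^2/(2*(W:ℝ)^3) ≤ X/4 := by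
    rw [div_le_div_iff₀ (by positivity) (by norm_num)]
    nlinarith only [hM]
  have hCN : (C:ℝ)*((n:ℝ)^2/(2*(W:ℝ)^3)) ≤ (C:ℝ)*N := by
    calc (C:ℝ)*((n:ℝ)^2/(2*(W:ℝ)^3)) = (C:ℝ)*(n:ℝ)^2/(2*(W:ℝ)^3) := by ring
      _ ≤ X/4 := hq
      _ = (D:ℝ)*(n:ℝ) - ((W:ℝ)-1)*((D:ℝ)*((D:ℝ)+1)/2) - (n:ℝ)*(D:ℝ)/4 := hEX.symm
      _ ≤ (Good.card : ℝ) := hE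
      _ ≤ (C:ℝ) * (T.card:ℝ) := hGT
      _ ≤ (C:ℝ)*N := mul_le_mul_of_nonneg_left hTN (by positivity)
  exact le_of_mul_le_mul_left hCN (by linarith : (0:ℝ) < (C:ℝ))
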